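/- Let t and λ be positive integers with t ≥ λ+1. Then a digraph is a (t,λ)-liking digraph if and only if it is a two-way (t,λ)-liking digraph. -/

import Mathlib

open scoped Classical
open Finset

/-- The set of common out-neighbors of the vertex set `S` in the digraph
with arc relation `A`. -/
noncomputable def commonOut {V : Type*} [Fintype V] (A : V → V → Prop) (S : Finset V) : Finset V :=
  Finset.univ.filter fun w => ∀ v ∈ S, A v w

/-- The set of common in-neighbors of the vertex set `S`. -/
noncomputable def commonIn {V : Type*} [Fintype V] (A : V → V → Prop) (S : Finset V) : Finset V :=
  Finset.univ.filter fun w => ∀ v ∈ S, A w v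

/-- A `(t,λ)`-liking digraph: every `t` distinct vertices have exactly `λ`
common out-neighbors. -/
def IsLiking {V : Type*} [Fintype V] (A : V → V → Prop) (t lam : ℕ) : Prop :=
  ∀ S : Finset V, S.card = t → (commonOut A S).card = lam

/-- A two-way `(t,λ)`-liking digraph: every `t` distinct vertices have exactly `λ`
common out-neighbors and exactly `λ` common in-neighbors. -/
def IsTwoWayLiking {V : Type*} [Fintype V] (A : V → V → Prop) (t lam : ℕ) : Prop :=
  IsLiking A t lam ∧ ∀ S : Finset V, S.card = t → (commonIn A S).card = lam

/-- Out-degree of a vertex in the digraph with arc relation `A`. -/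
noncomputable def outDeg {V : Type*} [Fintype V] (A : V → V → Prop) (v : V) : ℕ :=
  (Finset.univ.filter fun w => A v w).card

/-- In-degree of a vertex. -/
noncomputable def inDeg {V : Type*} [Fintype V] (A : V → V → Prop) (v : V) : ℕ :=
  (Finset.univ.filter fun w => A w v).card

section Aux

variable {V : Type*} [Fintype V] {A : V → V → Prop}

lemma mem_commonOut' {S : Finset V} {w : V} : w ∈ commonOut A S ↔ ∀ v ∈ S, A v w := by
  simp [commonOut]

lemma mem_commonIn' {S : Finset V} {w : V} : w ∈ commonIn A S ↔ ∀ v ∈ S, A w v := by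
  simp [commonIn]

lemma not_mem_commonOut (hA : Irreflexive A) {S : Finset V} {w : V}
    (hw : w ∈ commonOut A S) : w ∉ S :=
  fun hmem => hA w (mem_commonOut'.1 hw w hmem)

/-- Every `(t-1)`-set has at least `λ+1` common out-neighbors. -/
lemma card_commonOut_pred_ge (hA : Irreflexive A) {t lam : ℕ} (hL : IsLiking A t lam)
    (hlam : 0 < lam) (ht1 : 1 ≤ t) (hn : t ≤ Fintype.card V)
    {T : Finset V} (hT : T.card = t - 1) :
    lam + 1 ≤ (commonOut A T).card := by
  have hne : (Finset.univ \ T).Nonempty := by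
    rw [← Finset.card_pos, Finset.card_sdiff_of_subset (Finset.subset_univ T), Finset.card_univ, hT]
    omega
  obtain ⟨v, hv⟩ := hne
  have hvT : v ∉ T := (Finset.mem_sdiff.mp hv).2
  have hins : (insert v T).card = t := by
    rw [Finset.card_insert_of_notMem hvT, hT]; omega
  have hmono : commonOut A (insert v T) ⊆ commonOut A T := by
    intro w hw
    rw [mem_commonOut'] at hw ⊢
    exact fun u hu => hw u (Finset.mem_insert_of_mem hu)
  have hge : lam ≤ (commonOut A T).card := by
    rw [← hL _ hins]; exact Finset.card_le_card hmono
  rcases Nat.lt_or_ge lam (commonOut A T).card with h | h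
  · omega
  · exfalso
    have heq : (commonOut A T).card = lam := le_antisymm h hge
    obtain ⟨c, hc⟩ : (commonOut A T).Nonempty := Finset.card_pos.mp (by omega)
    have hcT : c ∉ T := not_mem_commonOut hA hc
    have hinsc : (insert c T).card = t := by
      rw [Finset.card_insert_of_notMem hcT, hT]; omega
    have hmono' : commonOut A (insert c T) ⊆ commonOut A T := by
      intro w hw
      rw [mem_commonOut'] at hw ⊢
      exact fun u hu => hw u (Finset.mem_insert_of_mem hu)
    have hEq : commonOut A (insert c T) = commonOut A T :=
      Finset.eq_of_subset_of_card_le hmono' (by rw [hL _ hinsc, heq])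
    have hcc : c ∈ commonOut A (insert c T) := hEq ▸ hc
    exact hA c (mem_commonOut'.1 hcc c (Finset.mem_insert_self c T))

/-- For `t ≥ 3`, a `(t,λ)`-liking digraph with at least `t` vertices is complete. -/
lemma liking_complete (hA : Irreflexive A) {t lam : ℕ} (hL : IsLiking A t lam)
    (hlam : 0 < lam) (ht3 : 3 ≤ t) (hn : t ≤ Fintype.card V) :
    ∀ ⦃u x : V⦄, u ≠ x → A u x := by
  intro u x hux
  -- choose a (t-2)-set U with u ∈ U and x ∉ U
  obtain ⟨U, hUu, hUsub, hUcard⟩ :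
      ∃ U : Finset V, {u} ⊆ U ∧ U ⊆ Finset.univ \ {x} ∧
        U.card = (t - 3) + ({u} : Finset V).card := by
    refine (fun (h₁ : (Finset.univ \ {x}).card ≥ (t - 3) + ({u} : Finset V).card)
        (h₂ : {u} ⊆ Finset.univ \ {x}) => Finset.exists_subsuperset_card_eq h₂ (by omega) h₁) ?_ ?_
    · rw [Finset.card_singleton, Finset.card_sdiff_of_subset (Finset.subset_univ _),
        Finset.card_univ, Finset.card_singleton]
      omega
    · intro a ha
      rw [Finset.mem_singleton] at ha
      subst ha
      exact Finset.mem_sdiff.mpr ⟨Finset.mem_univ _, by simpa using hux⟩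
  rw [Finset.card_singleton] at hUcard
  have hUcard' : U.card = t - 2 := by omega
  have huU : u ∈ U := hUu (Finset.mem_singleton_self u)
  have hxU : x ∉ U := fun hx => by simpa using (Finset.mem_sdiff.mp (hUsub hx)).2
  set C := commonOut A U with hCdef
  have hCsub : C ⊆ Finset.univ \ U := fun w hw =>
    Finset.mem_sdiff.mpr ⟨Finset.mem_univ _, not_mem_commonOut hA hw⟩
  have hZset : ∀ y : V, y ∉ U → C.filter (fun w => A y w) = commonOut A (insert y U) := by
    intro y hy
    ext w
    simp only [Finset.mem_filter, hCdef, mem_commonOut', Finset.mem_insert]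
    constructor
    · rintro ⟨h1, h2⟩ v hv
      rcases hv with rfl | hv
      · exact h2
      · exact h1 v hv
    · intro h
      exact ⟨fun v hv => h v (Or.inr hv), h y (Or.inl rfl)⟩
  have hZcard : ∀ y : V, y ∉ U → lam + 1 ≤ (C.filter (fun w => A y w)).card := by
    intro y hy
    rw [hZset y hy]
    exact card_commonOut_pred_ge hA hL hlam (by omega) hn
      (by rw [Finset.card_insert_of_notMem hy, hUcard']; omega)
  have hZZ : ∀ y z : V, y ∉ U → z ∉ U → y ≠ z →
      (C.filter (fun w => A y w ∧ A z w)).card = lam := by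
    intro y z hyU hzU hyz
    have hset : C.filter (fun w => A y w ∧ A z w) = commonOut A (insert y (insert z U)) := by
      ext w
      simp only [Finset.mem_filter, hCdef, mem_commonOut', Finset.mem_insert]
      constructor
      · rintro ⟨h1, h2, h3⟩ v hv
        rcases hv with rfl | rfl | hv
        · exact h2
        · exact h3
        · exact h1 v hv
      · intro h
        exact ⟨fun v hv => h v (Or.inr (Or.inr hv)), h y (Or.inl rfl),
          h z (Or.inr (Or.inl rfl))⟩
    rw [hset]
    apply hL
    have hyz' : y ∉ insert z U := by
      simp only [Finset.mem_insert]
      push_neg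
      exact ⟨hyz, hyU⟩
    rw [Finset.card_insert_of_notMem hyz', Finset.card_insert_of_notMem hzU, hUcard']
    omega
  -- indicator vectors of the blocks, as functions on C
  let f : {y : V // y ∈ Finset.univ \ U} → ({w : V // w ∈ C} → ℝ) :=
    fun y w => if A y.1 w.1 then 1 else 0
  have hip : ∀ y z : {y : V // y ∈ Finset.univ \ U},
      ∑ w : {w : V // w ∈ C}, f y w * f z w
        = ((C.filter (fun w => A y.1 w ∧ A z.1 w)).card : ℝ) := by
    intro y z
    have h1 : ∀ w : {w : V // w ∈ C}, f y w * f z w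
        = (fun a => if A y.1 a ∧ A z.1 a then (1:ℝ) else 0) w.1 := by
      intro w
      by_cases h1 : A y.1 w.1 <;> by_cases h2 : A z.1 w.1 <;> simp [f, h1, h2]
    calc ∑ w : {w : V // w ∈ C}, f y w * f z w
        = ∑ w : {w : V // w ∈ C}, (fun a => if A y.1 a ∧ A z.1 a then (1:ℝ) else 0) w.1 :=
          Finset.sum_congr rfl fun w _ => h1 w
      _ = ∑ w ∈ C, (fun a => if A y.1 a ∧ A z.1 a then (1:ℝ) else 0) w :=
          Finset.sum_coe_sort C (fun a => if A y.1 a ∧ A z.1 a then (1:ℝ) else 0)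
      _ = ((C.filter (fun w => A y.1 w ∧ A z.1 w)).card : ℝ) := Finset.sum_boole _ _
  have hmemy : ∀ y : {y : V // y ∈ Finset.univ \ U}, y.1 ∉ U :=
    fun y => (Finset.mem_sdiff.mp y.2).2
  have hdiag : ∀ y : {y : V // y ∈ Finset.univ \ U},
      C.filter (fun w => A y.1 w ∧ A y.1 w) = C.filter (fun w => A y.1 w) := by
    intro y; ext w; simp
  have hli : LinearIndependent ℝ f := by
    rw [linearIndependent_iff']
    intro s g hsum i hi
    have hzero : ∀ w : {w : V // w ∈ C}, ∑ j ∈ s, g j * f j w = 0 := by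
      intro w
      have := congrFun hsum w
      simpa [Finset.sum_apply] using this
    have hQ : ∑ w : {w : V // w ∈ C}, (∑ j ∈ s, g j * f j w) * (∑ k ∈ s, g k * f k w) = 0 :=
      Finset.sum_eq_zero fun w _ => by rw [hzero w, mul_zero]
    have hexp : ∑ w : {w : V // w ∈ C}, (∑ j ∈ s, g j * f j w) * (∑ k ∈ s, g k * f k w)
        = ∑ j ∈ s, ∑ k ∈ s, (g j * g k) * ∑ w : {w : V // w ∈ C}, f j w * f k w := by
      calc ∑ w : {w : V // w ∈ C}, (∑ j ∈ s, g j * f j w) * (∑ k ∈ s, g k * f k w)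
          = ∑ w : {w : V // w ∈ C}, ∑ j ∈ s, ∑ k ∈ s, (g j * f j w) * (g k * f k w) :=
            Finset.sum_congr rfl fun w _ => Finset.sum_mul_sum s s _ _
        _ = ∑ j ∈ s, ∑ w : {w : V // w ∈ C}, ∑ k ∈ s, (g j * f j w) * (g k * f k w) :=
            Finset.sum_comm
        _ = ∑ j ∈ s, ∑ k ∈ s, ∑ w : {w : V // w ∈ C}, (g j * f j w) * (g k * f k w) :=
            Finset.sum_congr rfl fun j _ => Finset.sum_comm
        _ = ∑ j ∈ s, ∑ k ∈ s, (g j * g k) * ∑ w : {w : V // w ∈ C}, f j w * f k w := by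
            refine Finset.sum_congr rfl fun j _ => Finset.sum_congr rfl fun k _ => ?_
            rw [Finset.mul_sum]
            exact Finset.sum_congr rfl fun w _ => by ring
    have hval : ∀ j ∈ s, ∀ k ∈ s, (g j * g k) * (∑ w : {w : V // w ∈ C}, f j w * f k w)
        = (g j * g k) * (lam : ℝ)
          + (if k = j then (g j * g j) * (((C.filter (fun w => A j.1 w)).card : ℝ) - lam)
            else 0) := by
      intro j _ k _
      by_cases h : k = j
      · subst h
        rw [hip k k, hdiag k, if_pos rfl]
        ring
      · rw [hip j k, hZZ j.1 k.1 (hmemy j) (hmemy k)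
          (fun hh => h (Subtype.ext hh.symm)), if_neg h]
        ring
    have hsplit : ∑ j ∈ s, ∑ k ∈ s, (g j * g k) * (∑ w : {w : V // w ∈ C}, f j w * f k w)
        = (lam : ℝ) * ((∑ j ∈ s, g j) * (∑ j ∈ s, g j))
          + ∑ j ∈ s, (g j * g j) * (((C.filter (fun w => A j.1 w)).card : ℝ) - lam) := by
      rw [Finset.sum_congr rfl fun j hj => Finset.sum_congr rfl fun k hk => hval j hj k hk]
      rw [Finset.sum_congr rfl fun j (_ : j ∈ s) => Finset.sum_add_distrib]
      rw [Finset.sum_add_distrib]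
      congr 1
      · have h1 : ∀ j ∈ s, ∑ k ∈ s, (g j * g k) * (lam : ℝ)
            = g j * (∑ k ∈ s, g k) * (lam : ℝ) := by
          intro j _
          rw [Finset.mul_sum, Finset.sum_mul]
        rw [Finset.sum_congr rfl h1, ← Finset.sum_mul, ← Finset.sum_mul]
        ring
      · refine Finset.sum_congr rfl fun j hj => ?_
        rw [Finset.sum_ite_eq' s j
          (fun _ => (g j * g j) * (((C.filter (fun w => A j.1 w)).card : ℝ) - lam)),
          if_pos hj]
    have hterm : ∀ j ∈ s,
        (0:ℝ) ≤ (g j * g j) * (((C.filter (fun w => A j.1 w)).card : ℝ) - lam) := by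
      intro j _
      apply mul_nonneg (mul_self_nonneg _)
      have h1 := hZcard j.1 (hmemy j)
      have h2 : (lam:ℝ) + 1 ≤ ((C.filter (fun w => A j.1 w)).card : ℝ) := by exact_mod_cast h1
      linarith
    have h0 : (0:ℝ) = (lam : ℝ) * ((∑ j ∈ s, g j) * (∑ j ∈ s, g j))
        + ∑ j ∈ s, (g j * g j) * (((C.filter (fun w => A j.1 w)).card : ℝ) - lam) := by
      rw [← hsplit, ← hexp, hQ]
    have hsum0 : ∑ j ∈ s, (g j * g j) * (((C.filter (fun w => A j.1 w)).card : ℝ) - lam)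
        = 0 := by
      have hnn : (0:ℝ) ≤ (lam : ℝ) * ((∑ j ∈ s, g j) * (∑ j ∈ s, g j)) :=
        mul_nonneg (by positivity) (mul_self_nonneg _)
      have hnn2 : (0:ℝ) ≤ ∑ j ∈ s, (g j * g j) *
          (((C.filter (fun w => A j.1 w)).card : ℝ) - lam) := Finset.sum_nonneg hterm
      linarith
    have hzero' := (Finset.sum_eq_zero_iff_of_nonneg hterm).mp hsum0 i hi
    have hcpos : (0:ℝ) < ((C.filter (fun w => A i.1 w)).card : ℝ) - lam := by
      have h1 := hZcard i.1 (hmemy i)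
      have h2 : (lam:ℝ) + 1 ≤ ((C.filter (fun w => A i.1 w)).card : ℝ) := by exact_mod_cast h1
      linarith
    rcases mul_eq_zero.mp hzero' with h | h
    · exact mul_self_eq_zero.mp h
    · exact absurd h (ne_of_gt hcpos)
  have hcardle := hli.fintype_card_le_finrank
  rw [Module.finrank_fintype_fun_eq_card, Fintype.card_coe, Fintype.card_coe] at hcardle
  have hCeq : C = Finset.univ \ U := Finset.eq_of_subset_of_card_le hCsub hcardle
  have hxC : x ∈ C := by
    rw [hCeq]
    exact Finset.mem_sdiff.mpr ⟨Finset.mem_univ _, hxU⟩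
  exact mem_commonOut'.1 hxC u huU

/-- Double counting: summing the sizes of the "common `B`-successor" sets over all
`k`-subsets equals the sum over vertices of binomial coefficients of "degrees". -/
lemma sum_card_filter_forall (B : V → V → Prop) (k : ℕ) :
    ∑ S ∈ Finset.powersetCard k (Finset.univ : Finset V),
        (Finset.univ.filter fun w => ∀ v ∈ S, B v w).card
      = ∑ w : V, ((Finset.univ.filter fun v => B v w).card.choose k) := by
  calc ∑ S ∈ Finset.powersetCard k (Finset.univ : Finset V),
        (Finset.univ.filter fun w => ∀ v ∈ S, B v w).card
      = ∑ S ∈ Finset.powersetCard k (Finset.univ : Finset V),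
          ∑ w : V, (if ∀ v ∈ S, B v w then 1 else 0) :=
        Finset.sum_congr rfl fun S _ => Finset.card_filter _ _
    _ = ∑ w : V, ∑ S ∈ Finset.powersetCard k (Finset.univ : Finset V),
          (if ∀ v ∈ S, B v w then 1 else 0) := Finset.sum_comm
    _ = ∑ w : V, ((Finset.powersetCard k (Finset.univ : Finset V)).filter
          (fun S => ∀ v ∈ S, B v w)).card :=
        Finset.sum_congr rfl fun w _ => (Finset.card_filter _ _).symm
    _ = ∑ w : V, (Finset.powersetCard k (Finset.univ.filter fun v => B v w)).card := by
        refine Finset.sum_congr rfl fun w _ => ?_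
        congr 1
        ext S
        simp only [Finset.mem_filter, Finset.mem_powersetCard, Finset.subset_univ, true_and]
        constructor
        · rintro ⟨hcard, hall⟩
          exact ⟨fun v hv => Finset.mem_filter.mpr ⟨Finset.mem_univ _, hall v hv⟩, hcard⟩
        · rintro ⟨hsub, hcard⟩
          exact ⟨hcard, fun v hv => (Finset.mem_filter.mp (hsub hv)).2⟩
    _ = ∑ w : V, ((Finset.univ.filter fun v => B v w).card.choose k) :=
        Finset.sum_congr rfl fun w _ => Finset.card_powersetCard _ _

lemma inDeg_le_outDeg (hA : Irreflexive A) (hL : IsLiking A 2 1) (v : V) :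
    inDeg A v ≤ outDeg A v := by
  have key : ∀ u : V, A u v → ∃ z, commonOut A {u, v} = {z} := by
    intro u hu
    apply Finset.card_eq_one.mp
    apply hL
    have huv : u ≠ v := fun h => hA v (h ▸ hu)
    rw [Finset.card_insert_of_notMem (by simp [huv]), Finset.card_singleton]
  choose! z hz using key
  unfold inDeg outDeg
  apply Finset.card_le_card_of_injOn z
  · intro a ha
    rw [Finset.mem_coe, Finset.mem_filter] at ha
    have hza : z a ∈ commonOut A {a, v} := (hz a ha.2) ▸ Finset.mem_singleton_self _
    rw [Finset.mem_coe, Finset.mem_filter]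
    exact ⟨Finset.mem_univ _, mem_commonOut'.1 hza v (by simp)⟩
  · intro a ha b hb hab
    rw [Finset.coe_filter] at ha hb
    simp only [Set.mem_setOf_eq] at ha hb
    by_contra hne
    have hza : z a ∈ commonOut A {a, v} := (hz a ha.2) ▸ Finset.mem_singleton_self _
    have hzb : z b ∈ commonOut A {b, v} := (hz b hb.2) ▸ Finset.mem_singleton_self _
    have hcard : ({a, b} : Finset V).card = 2 := by
      rw [Finset.card_insert_of_notMem (by simpa using hne), Finset.card_singleton]
    have hsub : ({v, z a} : Finset V) ⊆ commonOut A {a, b} := by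
      intro w hw
      rw [Finset.mem_insert, Finset.mem_singleton] at hw
      rw [mem_commonOut']
      intro p hp
      rw [Finset.mem_insert, Finset.mem_singleton] at hp
      rcases hw with rfl | rfl
      · rcases hp with rfl | rfl
        · exact ha.2
        · exact hb.2
      · rcases hp with rfl | rfl
        · exact mem_commonOut'.1 hza p (by simp)
        · exact hab ▸ mem_commonOut'.1 hzb p (by simp)
    have hzav : z a ≠ v := by
      intro h
      exact hA v (h ▸ mem_commonOut'.1 hza v (by simp))
    have h2 : ({v, z a} : Finset V).card = 2 := by
      rw [Finset.card_insert_of_notMem (by simpa using hzav.symm), Finset.card_singleton]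
    have := Finset.card_le_card hsub
    rw [h2, hL _ hcard] at this
    omega

lemma sum_inDeg_eq_sum_outDeg : ∑ v : V, inDeg A v = ∑ v : V, outDeg A v := by
  unfold inDeg outDeg
  simp_rw [Finset.card_filter]
  exact Finset.sum_comm

lemma commonIn_card_le_one (hA : Irreflexive A) (hL : IsLiking A 2 1)
    {S : Finset V} (hS : S.card = 2) : (commonIn A S).card ≤ 1 := by
  apply Finset.card_le_one.mpr
  intro a ha b hb
  by_contra hne
  have hcard : ({a, b} : Finset V).card = 2 := by
    rw [Finset.card_insert_of_notMem (by simpa using hne), Finset.card_singleton]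
  have hsub : S ⊆ commonOut A {a, b} := by
    intro w hw
    rw [mem_commonOut']
    intro p hp
    rw [Finset.mem_insert, Finset.mem_singleton] at hp
    rcases hp with rfl | rfl
    · exact mem_commonIn'.1 ha w hw
    · exact mem_commonIn'.1 hb w hw
  have := Finset.card_le_card hsub
  rw [hS, hL _ hcard] at this
  omega

lemma twoWay_t2 (hA : Irreflexive A) (hL : IsLiking A 2 1) :
    ∀ S : Finset V, S.card = 2 → (commonIn A S).card = 1 := by
  have hdegsum : ∀ v : V, inDeg A v = outDeg A v := by
    have h1 := Finset.sum_eq_sum_iff_of_le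
      (f := fun v : V => inDeg A v) (g := fun v : V => outDeg A v) (s := Finset.univ)
      (fun v _ => inDeg_le_outDeg hA hL v)
    intro v
    exact (h1.mp sum_inDeg_eq_sum_outDeg) v (Finset.mem_univ v)
  -- double counting
  have hOut : ∑ S ∈ Finset.powersetCard 2 (Finset.univ : Finset V), (commonOut A S).card
      = ∑ w : V, (inDeg A w).choose 2 := by
    exact sum_card_filter_forall A 2
  have hIn : ∑ S ∈ Finset.powersetCard 2 (Finset.univ : Finset V), (commonIn A S).card
      = ∑ w : V, (outDeg A w).choose 2 := by
    have h := sum_card_filter_forall (fun a b => A b a) 2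
    calc ∑ S ∈ Finset.powersetCard 2 (Finset.univ : Finset V), (commonIn A S).card
        = ∑ S ∈ Finset.powersetCard 2 (Finset.univ : Finset V),
            (Finset.univ.filter fun w => ∀ v ∈ S, (fun a b => A b a) v w).card := by
          refine Finset.sum_congr rfl fun S _ => ?_
          congr 1
      _ = ∑ w : V, ((Finset.univ.filter fun v => (fun a b => A b a) v w).card.choose 2) := h
      _ = ∑ w : V, (outDeg A w).choose 2 := by
          refine Finset.sum_congr rfl fun w _ => ?_
          congr 2
  have hsums : ∑ S ∈ Finset.powersetCard 2 (Finset.univ : Finset V), (commonIn A S).card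
      = ∑ S ∈ Finset.powersetCard 2 (Finset.univ : Finset V), 1 := by
    rw [hIn]
    have h2 : ∑ w : V, (outDeg A w).choose 2 = ∑ w : V, (inDeg A w).choose 2 := by
      exact Finset.sum_congr rfl fun w _ => by rw [hdegsum w]
    rw [h2, ← hOut]
    refine Finset.sum_congr rfl fun S hS => ?_
    rw [hL S (Finset.mem_powersetCard.mp hS).2]
  have hall := (Finset.sum_eq_sum_iff_of_le
    (fun (S : Finset V) (hS : S ∈ Finset.powersetCard 2 (Finset.univ : Finset V)) =>
      commonIn_card_le_one hA hL (Finset.mem_powersetCard.mp hS).2)).mp hsums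
  intro S hS
  exact hall S (Finset.mem_powersetCard.mpr ⟨Finset.subset_univ S, hS⟩)

end Aux

/-- For `t ≥ λ+1`, a digraph is a `(t,λ)`-liking digraph iff it is a two-way
`(t,λ)`-liking digraph. -/
theorem stmt_9 {V : Type*} [Fintype V] (A : V → V → Prop) (hA : Irreflexive A)
    (t lam : ℕ) (hlam : 0 < lam) (ht : lam + 1 ≤ t) :
    IsLiking A t lam ↔ IsTwoWayLiking A t lam := by
  constructor
  · intro hL
    refine ⟨hL, ?_⟩
    intro S hS
    have hn : t ≤ Fintype.card V := hS ▸ Finset.card_le_univ S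
    rcases Nat.lt_or_ge t 3 with h3 | h3
    · -- t = 2, lam = 1
      have ht2 : t = 2 := by omega
      have hl1 : lam = 1 := by omega
      subst ht2
      subst hl1
      exact twoWay_t2 hA hL S hS
    · -- t ≥ 3 : the digraph is complete
      have hcomp := liking_complete hA hL hlam h3 hn
      have hout : commonOut A S = Finset.univ \ S := by
        ext w
        rw [mem_commonOut', Finset.mem_sdiff]
        constructor
        · intro hw
          refine ⟨Finset.mem_univ _, fun hwS => hA w (hw w hwS)⟩
        · rintro ⟨-, hw⟩ v hv
          exact hcomp (fun h => hw (h ▸ hv))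
      have hin : commonIn A S = Finset.univ \ S := by
        ext w
        rw [mem_commonIn', Finset.mem_sdiff]
        constructor
        · intro hw
          refine ⟨Finset.mem_univ _, fun hwS => hA w (hw w hwS)⟩
        · rintro ⟨-, hw⟩ v hv
          refine hcomp (fun h => hw ?_)
          rw [h]
          exact hv
      have hlamval : (Finset.univ \ S).card = lam := by
        rw [← hL S hS, hout]
      rw [hin, hlamval]
  · exact fun h => h.1
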